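/- For u > 0 define ĥ(u) = 4(e^{−u} − 1 + u) − (e^{−2u} − 1 + 2u). Then the function u ↦ ĥ(u)(1 + 2u)²/u³ is monotone increasing on (0, ∞), and for all u > 0, 2/3 ≤ ĥ(u)(1 + 2u)²/u³ ≤ 8. Equivalently, (2/3) u³/(1 + 2u)² ≤ ĥ(u) ≤ 8 u³/(1 + 2u)². -/

import Mathlib

open Real

lemma nonneg_of_deriv (f f' : ℝ → ℝ) (hd : ∀ x, HasDerivAt f (f' x) x)
    (h0 : 0 ≤ f 0) (hf' : ∀ x, 0 ≤ x → 0 ≤ f' x) : ∀ x, 0 ≤ x → 0 ≤ f x := by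
  intro x hx
  have hmono : MonotoneOn f (Set.Ici 0) := by
    apply monotoneOn_of_deriv_nonneg (convex_Ici 0)
    · exact Continuous.continuousOn (continuous_iff_continuousAt.2
        fun y => (hd y).continuousAt)
    · exact fun y _ => ((hd y).differentiableAt).differentiableWithinAt
    · intro y hy
      rw [interior_Ici] at hy
      rw [(hd y).deriv]
      exact hf' y (le_of_lt hy)
  calc (0:ℝ) ≤ f 0 := h0
    _ ≤ f x := hmono (Set.mem_Ici.2 (le_refl 0)) (Set.mem_Ici.2 hx) hx

lemma expneg_hasDeriv (x : ℝ) :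
    HasDerivAt (fun u : ℝ => Real.exp (-u)) (-Real.exp (-x)) x := by
  simpa using (hasDerivAt_neg x).exp

lemma E2 : ∀ u : ℝ, 0 ≤ u → Real.exp (-u) ≤ 1 - u + u^2/2 := by
  have := nonneg_of_deriv (fun u => 1 - u + u^2/2 - Real.exp (-u))
    (fun u => -1 + u + Real.exp (-u))
    (fun x => by
      have h1 : HasDerivAt (fun u : ℝ => 1 - u + u^2/2) (-1 + x) x := by
        have := ((hasDerivAt_id x).pow 2).div_const 2
        have h2 := ((hasDerivAt_const x (1:ℝ)).fun_sub (hasDerivAt_id x)).fun_add this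
        convert h2 using 1 <;> (try with_reducible_and_instances rfl) <;> simp [id] <;> ring
      simpa using h1.fun_sub (expneg_hasDeriv x))
    (by norm_num)
    (fun x hx => by beta_reduce; nlinarith [Real.add_one_le_exp (-x)])
  intro u hu; linarith [this u hu]

lemma E3 : ∀ u : ℝ, 0 ≤ u → 1 - u + u^2/2 - u^3/6 ≤ Real.exp (-u) := by
  have := nonneg_of_deriv (fun u => Real.exp (-u) - (1 - u + u^2/2 - u^3/6))
    (fun u => -Real.exp (-u) - (-1 + u - u^2/2))
    (fun x => by
      have h1 : HasDerivAt (fun u : ℝ => 1 - u + u^2/2 - u^3/6) (-1 + x - x^2/2) x := by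
        have h2 := (((hasDerivAt_const x (1:ℝ)).fun_sub (hasDerivAt_id x)).fun_add
          (((hasDerivAt_id x).pow 2).div_const 2)).fun_sub (((hasDerivAt_id x).pow 3).div_const 6)
        convert h2 using 1 <;> (try with_reducible_and_instances rfl) <;> simp [id] <;> ring
      convert (expneg_hasDeriv x).fun_sub h1 using 1 <;> (try with_reducible_and_instances rfl) <;> try ring)
    (by norm_num)
    (fun x hx => by beta_reduce; nlinarith [E2 x hx])
  intro u hu; linarith [this u hu]

lemma E4 : ∀ u : ℝ, 0 ≤ u → Real.exp (-u) ≤ 1 - u + u^2/2 - u^3/6 + u^4/24 := by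
  have := nonneg_of_deriv (fun u => 1 - u + u^2/2 - u^3/6 + u^4/24 - Real.exp (-u))
    (fun u => (-1 + u - u^2/2 + u^3/6) + Real.exp (-u))
    (fun x => by
      have h1 : HasDerivAt (fun u : ℝ => 1 - u + u^2/2 - u^3/6 + u^4/24)
          (-1 + x - x^2/2 + x^3/6) x := by
        have h2 := ((((hasDerivAt_const x (1:ℝ)).fun_sub (hasDerivAt_id x)).fun_add
          (((hasDerivAt_id x).pow 2).div_const 2)).fun_sub
          (((hasDerivAt_id x).pow 3).div_const 6)).fun_add (((hasDerivAt_id x).pow 4).div_const 24)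
        convert h2 using 1 <;> (try with_reducible_and_instances rfl) <;> simp [id] <;> ring
      convert h1.fun_sub (expneg_hasDeriv x) using 1 <;> (try with_reducible_and_instances rfl) <;> try ring)
    (by norm_num)
    (fun x hx => by beta_reduce; nlinarith [E3 x hx])
  intro u hu; linarith [this u hu]

lemma E5 : ∀ u : ℝ, 0 ≤ u →
    1 - u + u^2/2 - u^3/6 + u^4/24 - u^5/120 ≤ Real.exp (-u) := by
  have := nonneg_of_deriv
    (fun u => Real.exp (-u) - (1 - u + u^2/2 - u^3/6 + u^4/24 - u^5/120))
    (fun u => -Real.exp (-u) - (-1 + u - u^2/2 + u^3/6 - u^4/24))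
    (fun x => by
      have h1 : HasDerivAt (fun u : ℝ => 1 - u + u^2/2 - u^3/6 + u^4/24 - u^5/120)
          (-1 + x - x^2/2 + x^3/6 - x^4/24) x := by
        have h2 := (((((hasDerivAt_const x (1:ℝ)).fun_sub (hasDerivAt_id x)).fun_add
          (((hasDerivAt_id x).pow 2).div_const 2)).fun_sub
          (((hasDerivAt_id x).pow 3).div_const 6)).fun_add
          (((hasDerivAt_id x).pow 4).div_const 24)).fun_sub
          (((hasDerivAt_id x).pow 5).div_const 120)
        convert h2 using 1 <;> (try with_reducible_and_instances rfl) <;> simp [id] <;> ring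
      convert (expneg_hasDeriv x).fun_sub h1 using 1 <;> (try with_reducible_and_instances rfl) <;> try ring)
    (by norm_num)
    (fun x hx => by beta_reduce; nlinarith [E4 x hx])
  intro u hu; linarith [this u hu]

lemma EXP3 : ∀ u : ℝ, 0 ≤ u → 1 + u + u^2/2 + u^3/6 ≤ Real.exp u := by
  have h2 : ∀ u : ℝ, 0 ≤ u → 1 + u + u^2/2 ≤ Real.exp u := by
    have := nonneg_of_deriv (fun u => Real.exp u - (1 + u + u^2/2))
      (fun u => Real.exp u - (1 + u))
      (fun x => by
        have h1 : HasDerivAt (fun u : ℝ => 1 + u + u^2/2) (1 + x) x := by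
          have h2 := ((hasDerivAt_const x (1:ℝ)).fun_add (hasDerivAt_id x)).fun_add
            (((hasDerivAt_id x).pow 2).div_const 2)
          convert h2 using 1 <;> (try with_reducible_and_instances rfl) <;> simp [id] <;> ring
        exact (Real.hasDerivAt_exp x).fun_sub h1)
      (by norm_num)
      (fun x hx => by beta_reduce; nlinarith [Real.add_one_le_exp x])
    intro u hu; linarith [this u hu]
  have := nonneg_of_deriv (fun u => Real.exp u - (1 + u + u^2/2 + u^3/6))
    (fun u => Real.exp u - (1 + u + u^2/2))
    (fun x => by
      have h1 : HasDerivAt (fun u : ℝ => 1 + u + u^2/2 + u^3/6) (1 + x + x^2/2) x := by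
        have h2 := (((hasDerivAt_const x (1:ℝ)).fun_add (hasDerivAt_id x)).fun_add
          (((hasDerivAt_id x).pow 2).div_const 2)).fun_add (((hasDerivAt_id x).pow 3).div_const 6)
        convert h2 using 1 <;> (try with_reducible_and_instances rfl) <;> simp [id] <;> ring
      exact (Real.hasDerivAt_exp x).fun_sub h1)
    (by norm_num)
    (fun x hx => by beta_reduce; linarith [h2 x hx])
  intro u hu; linarith [this u hu]


lemma keyG : ∀ u : ℝ, 0 ≤ u →
    0 ≤ 9 + 2*u - (12 + 12*u + 8*u^2) * Real.exp (-u)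
      + (3 + 4*u + 4*u^2) * (Real.exp (-u))^2 := by
  intro u hu
  set y := Real.exp (-u) with hy
  have hy0 : 0 < y := Real.exp_pos _
  have hy1 : y ≤ 1 := Real.exp_le_one_iff.2 (by linarith)
  rcases le_or_gt u (3/2) with hc | hc
  · -- small u: compare with m = deg-4 upper truncation
    have hm : y ≤ 1 - u + u^2/2 - u^3/6 + u^4/24 := E4 u hu
    set m := 1 - u + u^2/2 - u^3/6 + u^4/24 with hmdef
    have hm1 : m ≤ 1 := by
      rw [hmdef]
      nlinarith [mul_nonneg (pow_nonneg hu 3) (by linarith : (0:ℝ) ≤ 3/2 - u), mul_nonneg hu (sq_nonneg (u - 12/5))]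
    have hGm : 0 ≤ 9 + 2*u - (12 + 12*u + 8*u^2) * m + (3 + 4*u + 4*u^2) * m^2 := by
      rw [hmdef]; nlinarith [mul_nonneg (pow_nonneg hu 4) (by linarith : (0:ℝ) ≤ 3/2 - u), mul_nonneg (pow_nonneg hu 5) (by linarith : (0:ℝ) ≤ 3/2 - u), mul_nonneg (pow_nonneg hu 6) (by linarith : (0:ℝ) ≤ 3/2 - u), mul_nonneg (mul_nonneg (pow_nonneg hu 4) (by linarith : (0:ℝ) ≤ 3/2 - u)) (by linarith : (0:ℝ) ≤ 3/2 - u), mul_nonneg (mul_nonneg (pow_nonneg hu 6) (by linarith : (0:ℝ) ≤ 3/2 - u)) (by linarith : (0:ℝ) ≤ 3/2 - u), pow_nonneg hu 4, pow_nonneg hu 6, sq_nonneg (u - 1)]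
    have hfac : 0 ≤ (m - y) * ((12 + 12*u + 8*u^2) - (3 + 4*u + 4*u^2) * (y + m)) := by
      apply mul_nonneg (by linarith)
      nlinarith [sq_nonneg u]
    nlinarith [hfac, hGm]
  · -- large u: drop the y² term
    have hp : y * (1 + u + u^2/2 + u^3/6) ≤ 1 := by
      have := EXP3 u hu
      calc y * (1 + u + u^2/2 + u^3/6) ≤ y * Real.exp u := by
            apply mul_le_mul_of_nonneg_left this hy0.le
        _ = 1 := by rw [hy, ← Real.exp_add]; simp
    have hpoly : (12 + 12*u + 8*u^2) ≤ (9 + 2*u) * (1 + u + u^2/2 + u^3/6) := by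
      nlinarith [sq_nonneg (u - 3/2), sq_nonneg u]
    have : (12 + 12*u + 8*u^2) * y ≤ 9 + 2*u := by
      calc (12 + 12*u + 8*u^2) * y ≤ (9 + 2*u) * (1 + u + u^2/2 + u^3/6) * y := by
            apply mul_le_mul_of_nonneg_right hpoly hy0.le
        _ = (9 + 2*u) * (y * (1 + u + u^2/2 + u^3/6)) := by ring
        _ ≤ (9 + 2*u) * 1 := by
            apply mul_le_mul_of_nonneg_left hp (by linarith)
        _ = 9 + 2*u := by ring
    nlinarith [sq_nonneg y]


-- core lower bound : 2 u^3 ≤ 3 h(u) (1+2u)^2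
lemma core_lower : ∀ u : ℝ, 0 ≤ u →
    2*u^3 ≤ 3 * (4*Real.exp (-u) - (Real.exp (-u))^2 - 3 + 2*u) * (1 + 2*u)^2 := by
  intro u hu
  set y := Real.exp (-u) with hy
  have hy0 : 0 < y := Real.exp_pos _
  have hy1 : y ≤ 1 := Real.exp_le_one_iff.2 (by linarith)
  rcases le_or_gt u 2 with hc | hc
  · have hl : 1 - u + u^2/2 - u^3/6 + u^4/24 - u^5/120 ≤ y := E5 u hu
    set l := 1 - u + u^2/2 - u^3/6 + u^4/24 - u^5/120 with hldef
    have hfac : 0 ≤ (y - l) * (4 - y - l) * (1 + 2*u)^2 := by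
      apply mul_nonneg (mul_nonneg (by linarith) _) (sq_nonneg _)
      have : l ≤ 1 := by rw [hldef]; nlinarith [mul_nonneg (pow_nonneg hu 3) (by linarith : (0:ℝ) ≤ 2 - u), mul_nonneg hu (sq_nonneg (u - 12/5)), pow_nonneg hu 4]
      linarith
    have hA : 0 ≤ 3 * (4*l - l^2 - 3 + 2*u) * (1 + 2*u)^2 - 2*u^3 := by
      rw [hldef]
      nlinarith [mul_nonneg (pow_nonneg hu 4) (by linarith : (0:ℝ) ≤ 2 - u),
        mul_nonneg (pow_nonneg hu 5) (by linarith : (0:ℝ) ≤ 2 - u),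
        mul_nonneg (pow_nonneg hu 6) (by linarith : (0:ℝ) ≤ 2 - u),
        mul_nonneg (pow_nonneg hu 7) (by linarith : (0:ℝ) ≤ 2 - u),
        mul_nonneg (pow_nonneg hu 8) (by linarith : (0:ℝ) ≤ 2 - u),
        mul_nonneg (pow_nonneg hu 9) (by linarith : (0:ℝ) ≤ 2 - u),
        mul_nonneg (pow_nonneg hu 10) (by linarith : (0:ℝ) ≤ 2 - u),
        mul_nonneg (mul_nonneg (pow_nonneg hu 10) (by linarith : (0:ℝ) ≤ 2 - u)) (by linarith : (0:ℝ) ≤ 2 - u),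
        pow_nonneg hu 4, pow_nonneg hu 6, pow_nonneg hu 8, pow_nonneg hu 10, pow_nonneg hu 12]
    nlinarith [hfac, hA]
  · -- u ≥ 2 : h ≥ 2u - 3
    have h1 : 0 ≤ y * (4 - y) := mul_nonneg hy0.le (by linarith)
    nlinarith [h1, sq_nonneg (1 + 2*u), hc]


-- core upper bound : h(u)(1+2u)^2 ≤ 8 u^3
lemma core_upper : ∀ u : ℝ, 0 ≤ u →
    (4*Real.exp (-u) - (Real.exp (-u))^2 - 3 + 2*u) * (1 + 2*u)^2 ≤ 8*u^3 := by
  intro u hu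
  set y := Real.exp (-u) with hy
  have hy0 : 0 < y := Real.exp_pos _
  have hy1 : y ≤ 1 := Real.exp_le_one_iff.2 (by linarith)
  rcases le_or_gt u 1 with hc | hc
  · -- small u : y ≤ m4, y ≥ l5 ≥ 0 so y^2 ≥ l5^2
    have hm : y ≤ 1 - u + u^2/2 - u^3/6 + u^4/24 := E4 u hu
    have hl : 1 - u + u^2/2 - u^3/6 + u^4/24 - u^5/120 ≤ y := E5 u hu
    set m := 1 - u + u^2/2 - u^3/6 + u^4/24 with hmdef
    set l := 1 - u + u^2/2 - u^3/6 + u^4/24 - u^5/120 with hldef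
    have hl0 : 0 ≤ l := by
      rw [hldef]
      nlinarith [sq_nonneg (u - 1), sq_nonneg (u^2 - u), pow_nonneg hu 4,
        mul_nonneg (pow_nonneg hu 4) (by linarith : (0:ℝ) ≤ 1 - u)]
    have hsq : l^2 ≤ y^2 := by nlinarith
    -- h ≤ 4m - l^2 - 3 + 2u ; need (4m - l^2 - 3 + 2u)(1+2u)^2 ≤ 8u^3
    have hB : (4*m - l^2 - 3 + 2*u) * (1 + 2*u)^2 ≤ 8*u^3 := by
      rw [hmdef, hldef]
      nlinarith [mul_nonneg (pow_nonneg hu 3) (by linarith : (0:ℝ) ≤ 1 - u),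
        mul_nonneg (pow_nonneg hu 4) (by linarith : (0:ℝ) ≤ 1 - u),
        mul_nonneg (pow_nonneg hu 5) (by linarith : (0:ℝ) ≤ 1 - u),
        mul_nonneg (pow_nonneg hu 6) (by linarith : (0:ℝ) ≤ 1 - u),
        mul_nonneg (pow_nonneg hu 7) (by linarith : (0:ℝ) ≤ 1 - u),
        mul_nonneg (pow_nonneg hu 8) (by linarith : (0:ℝ) ≤ 1 - u),
        mul_nonneg (pow_nonneg hu 9) (by linarith : (0:ℝ) ≤ 1 - u),
        mul_nonneg (pow_nonneg hu 10) (by linarith : (0:ℝ) ≤ 1 - u),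
        mul_nonneg (pow_nonneg hu 11) (by linarith : (0:ℝ) ≤ 1 - u),
        mul_nonneg (mul_nonneg (pow_nonneg hu 10) (by linarith : (0:ℝ) ≤ 1 - u)) (by linarith : (0:ℝ) ≤ 1 - u),
        pow_nonneg hu 3, pow_nonneg hu 5, pow_nonneg hu 7, pow_nonneg hu 9, pow_nonneg hu 11, pow_nonneg hu 12]
    nlinarith [hB, hsq, sq_nonneg (1 + 2*u), mul_le_mul_of_nonneg_right hm (sq_nonneg (1 + 2*u))]
  · -- u ≥ 1 : h ≤ 2u - 3 + 4y, use y(1+u+u²/2) ≤ 1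
    have hp : y * (1 + u + u^2/2) ≤ 1 := by
      have h3 := EXP3 u hu
      calc y * (1 + u + u^2/2) ≤ y * Real.exp u := by
            apply mul_le_mul_of_nonneg_left (by nlinarith [pow_nonneg hu 3]) hy0.le
        _ = 1 := by rw [hy, ← Real.exp_add]; simp
    have hC : 0 ≤ (4*u^2 + 10*u + 3) * (1 + u + u^2/2) - 4*(1 + 2*u)^2 := by
      nlinarith [sq_nonneg (u - 1), pow_nonneg (by linarith : (0:ℝ) ≤ u - 1) 3]
    have h4y : 4*y*(1 + 2*u)^2 ≤ 4*u^2 + 10*u + 3 := by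
      have h1 : 4*y*(1 + 2*u)^2 ≤ y * (4*u^2 + 10*u + 3) * (1 + u + u^2/2) := by
        nlinarith [mul_nonneg hy0.le hC]
      have h2 : y * (4*u^2 + 10*u + 3) * (1 + u + u^2/2) ≤ 4*u^2 + 10*u + 3 := by
        have := mul_le_mul_of_nonneg_left hp (by nlinarith : (0:ℝ) ≤ 4*u^2 + 10*u + 3)
        nlinarith [this]
      linarith
    nlinarith [h4y, mul_nonneg (sq_nonneg y) (sq_nonneg (1 + 2*u))]


noncomputable def Nfun : ℝ → ℝ := fun u =>
  (4 * (Real.exp (-u) - 1 + u) - (Real.exp (-2*u) - 1 + 2*u)) * (1 + 2*u)^2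

lemma Nfun_hasDeriv (x : ℝ) :
    HasDerivAt Nfun
      ((4*(-Real.exp (-x) + 1) - (-2*Real.exp (-2*x) + 2)) * (1 + 2*x)^2
        + (4 * (Real.exp (-x) - 1 + x) - (Real.exp (-2*x) - 1 + 2*x)) * (2 * (2 * (1 + 2*x)))) x := by
  have he1 : HasDerivAt (fun u : ℝ => Real.exp (-u)) (-Real.exp (-x)) x := by
    simpa using (hasDerivAt_neg x).exp
  have he2 : HasDerivAt (fun u : ℝ => Real.exp (-2*u)) (-2*Real.exp (-2*x)) x := by
    have h0 : HasDerivAt (fun u : ℝ => -2*u) (-2) x := by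
      simpa using (hasDerivAt_id x).const_mul (-2 : ℝ)
    simpa [mul_comm] using h0.exp
  have hh1 : HasDerivAt (fun u : ℝ => 4 * (Real.exp (-u) - 1 + u) - (Real.exp (-2*u) - 1 + 2*u))
      (4*(-Real.exp (-x) + 1) - (-2*Real.exp (-2*x) + 2)) x := by
    have a1 := (((he1.sub_const 1).fun_add (hasDerivAt_id x)).const_mul (4:ℝ))
    have a2 := ((he2.sub_const 1).fun_add ((hasDerivAt_id x).const_mul (2:ℝ)))
    have := a1.fun_sub a2
    convert this using 1 <;> (try rfl) <;> try ring
  have hw : HasDerivAt (fun u : ℝ => (1 + 2*u)^2) (2 * (2 * (1 + 2*x))) x := by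
    have h0 : HasDerivAt (fun u : ℝ => 1 + 2*u) 2 x := by
      simpa using (hasDerivAt_const x (1:ℝ)).fun_add ((hasDerivAt_id x).const_mul (2:ℝ))
    have := h0.pow 2
    convert this using 1 <;> (try with_reducible_and_instances rfl) <;> (try push_cast) <;> (try ring)
  have := hh1.fun_mul hw
  convert this using 1 <;> (try rfl) <;> (try push_cast) <;> (try ring)

lemma G_hasDeriv (x : ℝ) (hx : 0 < x) :
    HasDerivAt (fun u : ℝ => Nfun u / u^3)
      ((((4*(-Real.exp (-x) + 1) - (-2*Real.exp (-2*x) + 2)) * (1 + 2*x)^2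
        + (4 * (Real.exp (-x) - 1 + x) - (Real.exp (-2*x) - 1 + 2*x)) * (2 * (2 * (1 + 2*x)))) * x^3
        - Nfun x * (3 * x^2)) / (x^3)^2) x := by
  have hd := (Nfun_hasDeriv x).fun_div (hasDerivAt_pow 3 x) (by positivity)
  convert hd using 1 <;> (try with_reducible_and_instances rfl) <;> (try push_cast) <;> (try ring)

lemma deriv_nonneg (x : ℝ) (hx : 0 < x) :
    0 ≤ ((((4*(-Real.exp (-x) + 1) - (-2*Real.exp (-2*x) + 2)) * (1 + 2*x)^2
        + (4 * (Real.exp (-x) - 1 + x) - (Real.exp (-2*x) - 1 + 2*x)) * (2 * (2 * (1 + 2*x)))) * x^3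
        - Nfun x * (3 * x^2)) / (x^3)^2) := by
  apply div_nonneg _ (sq_nonneg _)
  have hz : Real.exp (-2*x) = (Real.exp (-x))^2 := by
    rw [← Real.exp_nat_mul]; ring_nf
  set y := Real.exp (-x) with hy
  have key := keyG x hx.le
  have hid : (((4*(-y + 1) - (-2*Real.exp (-2*x) + 2)) * (1 + 2*x)^2
        + (4 * (y - 1 + x) - (Real.exp (-2*x) - 1 + 2*x)) * (2 * (2 * (1 + 2*x)))) * x^3
        - Nfun x * (3 * x^2))
      = x^2 * (1 + 2*x) * (9 + 2*x - (12 + 12*x + 8*x^2) * y + (3 + 4*x + 4*x^2) * y^2) := by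
    rw [Nfun, hz]; ring
  rw [hid]
  have : (0:ℝ) ≤ x^2 * (1 + 2*x) := by positivity
  exact mul_nonneg this key

lemma G_mono : MonotoneOn (fun u : ℝ => Nfun u / u^3) (Set.Ioi 0) := by
  apply monotoneOn_of_deriv_nonneg (convex_Ioi 0)
  · intro x hx
    exact ((G_hasDeriv x hx).continuousAt).continuousWithinAt
  · rw [interior_Ioi]
    intro x hx
    exact ((G_hasDeriv x hx).differentiableAt).differentiableWithinAt
  · rw [interior_Ioi]
    intro x hx
    rw [(G_hasDeriv x hx).deriv]
    exact deriv_nonneg x hx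


set_option maxHeartbeats 1000000 in
/-- The estimate leading to inequality (3.34): with
`ĥ(u) = 4(e^{-u}-1+u) - (e^{-2u}-1+2u)`, the function `u ↦ ĥ(u)(1+2u)²/u³`
is monotone increasing on `(0,∞)` and takes values in `[2/3, 8]`; equivalently,
`(2/3) u³/(1+2u)² ≤ ĥ(u) ≤ 8 u³/(1+2u)²` for all `u > 0`. -/
theorem position_variance_bounds
    (h : ℝ → ℝ)
    (hh : ∀ u : ℝ, h u =
      4 * (Real.exp (-u) - 1 + u) - (Real.exp (-2 * u) - 1 + 2 * u)) :
    MonotoneOn (fun u : ℝ => h u * (1 + 2 * u) ^ 2 / u ^ 3) (Set.Ioi 0) ∧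
    (∀ u : ℝ, 0 < u →
      2 / 3 ≤ h u * (1 + 2 * u) ^ 2 / u ^ 3 ∧
      h u * (1 + 2 * u) ^ 2 / u ^ 3 ≤ 8) ∧
    (∀ u : ℝ, 0 < u →
      (2 / 3) * (u ^ 3 / (1 + 2 * u) ^ 2) ≤ h u ∧
      h u ≤ 8 * (u ^ 3 / (1 + 2 * u) ^ 2)) := by
  have hz : ∀ u : ℝ, Real.exp (-2*u) = (Real.exp (-u))^2 := by
    intro u; rw [← Real.exp_nat_mul]; ring_nf
  have hval : ∀ u : ℝ, h u = 4*Real.exp (-u) - (Real.exp (-u))^2 - 3 + 2*u := by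
    intro u; rw [hh u, hz u]; ring
  have hcore1 : ∀ u : ℝ, 0 < u → 2*u^3 ≤ 3 * h u * (1 + 2*u)^2 := by
    intro u hu
    have := core_lower u hu.le
    rw [hval u]; linarith [this]
  have hcore2 : ∀ u : ℝ, 0 < u → h u * (1 + 2*u)^2 ≤ 8*u^3 := by
    intro u hu
    have := core_upper u hu.le
    rw [hval u]; linarith [this]
  refine ⟨?_, ?_, ?_⟩
  · have heq : Set.EqOn (fun u : ℝ => h u * (1 + 2 * u) ^ 2 / u ^ 3)
        (fun u : ℝ => Nfun u / u^3) (Set.Ioi 0) := by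
      intro u _
      simp only [Nfun, hh u]
    exact MonotoneOn.congr (G_mono) heq.symm
  · intro u hu
    have hu3 : (0:ℝ) < u^3 := by positivity
    constructor
    · rw [le_div_iff₀ hu3]
      have := hcore1 u hu
      linarith
    · rw [div_le_iff₀ hu3]
      exact hcore2 u hu
  · intro u hu
    have hW : (0:ℝ) < (1 + 2*u)^2 := by positivity
    constructor
    · rw [show (2:ℝ)/3 * (u^3 / (1 + 2*u)^2) = (2*u^3/3) / (1 + 2*u)^2 by ring,
        div_le_iff₀ hW]
      have := hcore1 u hu
      linarith
    · rw [show (8:ℝ) * (u^3 / (1 + 2*u)^2) = (8*u^3) / (1 + 2*u)^2 by ring,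
        le_div_iff₀ hW]
      exact hcore2 u hu
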